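/- Let p > q ≥ 0 be integers, set n = p+q, and let k be an integer with 0 ≤ k ≤ 2q+1. Then the number of signed (2p,2q+1) symmetric involutions (π,ε) whose involution π has exactly k 2-cycles equals C(n−2l, p−l)·C(n, 2l)·a(2l) if k = 2l is even, and equals C(n−2l−1, p−l−1)·C(n, 2l+1)·a(2l+1) if k = 2l+1 is odd, where C denotes the binomial coefficient. -/

import Mathlib

/-- `aSeq m = Σ_{b=0}^{⌊m/2⌋} C(m,2b)·(2b)!/b!`. -/
def aSeq (m : ℕ) : ℕ :=
  ∑ b ∈ Finset.range (m / 2 + 1), Nat.choose m (2 * b) * (Nat.factorial (2 * b) / Nat.factorial b)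

/-- A signed `(2p,2q+1)` symmetric involution: a pair `(π, ε)` where `π` is an involution of
`{1,…,2n+1}` (modelled as `Fin (2(p+q)+1)`) commuting with the order-reversing map
`i ↦ 2n+2-i` (here `Fin.rev`), and `ε` labels the fixed points of `π` by signs
(`true` = `+`, `false` = `-`; we normalize `ε` to `false` off the fixed points),
symmetrically under `Fin.rev`, with exactly `2p-(2q+1)` more `+` labels than `-` labels. -/
def IsSignedSymInv (p q : ℕ) (π : Equiv.Perm (Fin (2 * (p + q) + 1)))
    (ε : Fin (2 * (p + q) + 1) → Bool) : Prop :=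
  π * π = 1 ∧
  (∀ i, π i.rev = (π i).rev) ∧
  (∀ i, π i ≠ i → ε i = false) ∧
  (∀ i, π i = i → ε i.rev = ε i) ∧
  (Finset.univ.filter (fun i => π i = i ∧ ε i = true)).card
    = (Finset.univ.filter (fun i => π i = i ∧ ε i = false)).card + (2 * p - (2 * q + 1))

/-- The number of signed `(2p,2q+1)` symmetric involutions whose involution has exactly `k`
2-cycles, i.e. exactly `2k` non-fixed points. -/
noncomputable def signedSymInvCount (p q k : ℕ) : ℕ :=
  Nat.card {x : Equiv.Perm (Fin (2 * (p + q) + 1)) × (Fin (2 * (p + q) + 1) → Bool) //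
    IsSignedSymInv p q x.1 x.2 ∧
    (Finset.univ.filter (fun i => x.1 i ≠ i)).card = 2 * k}


instance (p q : ℕ) (π : Equiv.Perm (Fin (2 * (p + q) + 1)))
    (ε : Fin (2 * (p + q) + 1) → Bool) : Decidable (IsSignedSymInv p q π ε) := by
  unfold IsSignedSymInv; infer_instance

set_option linter.unusedSectionVars false
namespace SSI

open Finset Equiv

variable {n : ℕ}

def lo (i : Fin n) : Fin (2*n+1) := ⟨i, by have := i.isLt; omega⟩
def hi (i : Fin n) : Fin (2*n+1) := ⟨2*n - i, by omega⟩
def mid (n : ℕ) : Fin (2*n+1) := ⟨n, by omega⟩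

lemma lo_injective : Function.Injective (lo (n := n)) := by
  intro i j h; have := congrArg Fin.val h; simpa [lo, Fin.ext_iff] using this

lemma hi_injective : Function.Injective (hi (n := n)) := by
  intro i j h; have h2 := congrArg Fin.val h
  have hi1 := i.isLt; have hj1 := j.isLt
  simp only [hi] at h2; exact Fin.ext (by omega)

lemma lo_ne_hi {i j : Fin n} : lo i ≠ hi j := by
  intro h; have h2 := congrArg Fin.val h
  have := i.isLt; have := j.isLt; simp only [lo, hi] at h2; omega

lemma lo_ne_mid {i : Fin n} : lo i ≠ mid n := by
  intro h; have h2 := congrArg Fin.val h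
  have := i.isLt; simp only [lo, mid] at h2; omega

lemma hi_ne_mid {i : Fin n} : hi i ≠ mid n := by
  intro h; have h2 := congrArg Fin.val h
  have := i.isLt; simp only [hi, mid] at h2; omega

lemma rev_lo (i : Fin n) : (lo i).rev = hi i := by
  have := i.isLt
  simp only [lo, hi, Fin.rev, Fin.ext_iff]; omega

lemma rev_hi (i : Fin n) : (hi i).rev = lo i := by
  rw [← rev_lo, Fin.rev_rev]

lemma rev_mid : (mid n).rev = mid n := by
  simp only [mid, Fin.rev, Fin.ext_iff]; omega

lemma eq_mid_of_rev_eq {x : Fin (2*n+1)} (h : x.rev = x) : x = mid n := by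
  have h2 := congrArg Fin.val h
  rw [Fin.val_rev] at h2
  have := x.isLt
  exact Fin.ext (show (x:ℕ) = ((mid n : Fin (2*n+1)):ℕ) by show _ = n; omega)

lemma cases_lmh (x : Fin (2*n+1)) : (∃ i, x = lo i) ∨ x = mid n ∨ ∃ i, x = hi i := by
  rcases lt_trichotomy (x : ℕ) n with h | h | h
  · exact Or.inl ⟨⟨x, h⟩, Fin.ext rfl⟩
  · exact Or.inr (Or.inl (Fin.ext h))
  · refine Or.inr (Or.inr ⟨⟨2*n - x, by omega⟩, Fin.ext ?_⟩)
    have := x.isLt; simp only [hi]; omega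

section Structural

variable {π : Equiv.Perm (Fin (2*n+1))}
  (hπ2 : ∀ x, π (π x) = x) (hπr : ∀ x, π x.rev = (π x).rev)

include hπr in
lemma pi_mid : π (mid n) = mid n := by
  have := hπr (mid n)
  rw [rev_mid] at this
  exact eq_mid_of_rev_eq this.symm

include hπ2 hπr in
lemma pi_lo_ne_mid {i : Fin n} : π (lo i) ≠ mid n := by
  intro h
  have : π (mid n) = lo i := by rw [← h, hπ2]
  rw [pi_mid hπr] at this
  exact lo_ne_mid this.symm

include hπr in
lemma pi_hi (i : Fin n) : π (hi i) = (π (lo i)).rev := by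
  rw [← rev_lo, hπr]

include hπr in
lemma pi_lo_fixed_iff_hi {i : Fin n} : π (lo i) = lo i ↔ π (hi i) = hi i := by
  rw [pi_hi hπr, ← rev_lo, Fin.rev_inj]

end Structural

section Model

def Good (E : Finset (Fin n × Fin n)) : Prop :=
  (∀ e ∈ E, e.1 ≠ e.2) ∧
  (∀ e ∈ E, ∀ f ∈ E, e ≠ f → e.1 ≠ f.1 ∧ e.1 ≠ f.2 ∧ e.2 ≠ f.1 ∧ e.2 ≠ f.2)

instance (E : Finset (Fin n × Fin n)) : Decidable (Good E) := by
  unfold Good; infer_instance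

def used (E : Finset (Fin n × Fin n)) : Finset (Fin n) :=
  E.biUnion (fun e => {e.1, e.2})

lemma mem_used {E : Finset (Fin n × Fin n)} {i : Fin n} :
    i ∈ used E ↔ ∃ e ∈ E, e.1 = i ∨ e.2 = i := by
  simp [used, mem_biUnion, eq_comm]

lemma used_eq_empty : used (n := n) ∅ = ∅ := rfl

lemma card_used {E : Finset (Fin n × Fin n)} (hg : Good E) : (used E).card = 2 * E.card := by
  rw [used, card_biUnion]
  · rw [Finset.sum_congr rfl (fun e he => ?_), Finset.sum_const, smul_eq_mul, mul_comm]
    · rw [card_insert_of_notMem (by simp [(hg.1 e he)]), card_singleton]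
  · intro e he f hf hef
    obtain ⟨h1, h2, h3, h4⟩ := hg.2 e he f hf hef
    simp only [Finset.disjoint_left, mem_insert, mem_singleton]
    rintro a (rfl | rfl) <;> rintro (h | h) <;> simp_all

/-- the unique edge containing a given endpoint -/
lemma good_unique {E : Finset (Fin n × Fin n)} (hg : Good E) {e f : Fin n × Fin n}
    (he : e ∈ E) (hf : f ∈ E) (h : e.1 = f.1 ∨ e.1 = f.2 ∨ e.2 = f.1 ∨ e.2 = f.2) : e = f := by
  by_contra hne
  obtain ⟨h1, h2, h3, h4⟩ := hg.2 e he f hf hne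
  tauto

end Model

section Forward

def eset (π : Equiv.Perm (Fin (2*n+1))) : Finset (Fin n × Fin n) :=
  Finset.univ.filter fun e =>
    (e.1 < e.2 ∧ π (lo e.1) = lo e.2) ∨ (e.2 < e.1 ∧ π (lo e.1) = hi e.2)

def cset (π : Equiv.Perm (Fin (2*n+1))) : Finset (Fin n) :=
  Finset.univ.filter fun i => π (lo i) = hi i

def aset (ε : Fin (2*n+1) → Bool) : Finset (Fin n) :=
  Finset.univ.filter fun i => ε (lo i) = true

lemma mem_eset {π : Equiv.Perm (Fin (2*n+1))} {a b : Fin n} :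
    (a, b) ∈ eset π ↔ (a < b ∧ π (lo a) = lo b) ∨ (b < a ∧ π (lo a) = hi b) := by
  simp [eset]

lemma mem_cset {π : Equiv.Perm (Fin (2*n+1))} {i : Fin n} :
    i ∈ cset π ↔ π (lo i) = hi i := by simp [cset]

lemma mem_aset {ε : Fin (2*n+1) → Bool} {i : Fin n} :
    i ∈ aset ε ↔ ε (lo i) = true := by simp [aset]

variable {π : Equiv.Perm (Fin (2*n+1))}
  (hπ2 : ∀ x, π (π x) = x) (hπr : ∀ x, π x.rev = (π x).rev)

/-- symmetric relation: pairs matched by π -/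
def Rel (π : Equiv.Perm (Fin (2*n+1))) (i j : Fin n) : Prop :=
  i ≠ j ∧ (π (lo i) = lo j ∨ π (lo i) = hi j)

include hπ2 hπr in
lemma rel_symm {i j : Fin n} (h : Rel π i j) : Rel π j i := by
  obtain ⟨hne, h | h⟩ := h
  · exact ⟨hne.symm, Or.inl (by rw [← h, hπ2])⟩
  · refine ⟨hne.symm, Or.inr ?_⟩
    have : π (hi j) = lo i := by rw [← h, hπ2]
    rw [pi_hi hπr] at this
    rw [← rev_lo, ← this, Fin.rev_rev]

lemma rel_functional {i j j' : Fin n} (h : Rel π i j) (h' : Rel π i j') : j = j' := by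
  obtain ⟨_, h | h⟩ := h <;> obtain ⟨_, h' | h'⟩ := h' <;> rw [h] at h'
  · exact lo_injective h'
  · exact absurd h' lo_ne_hi
  · exact absurd h'.symm lo_ne_hi
  · exact hi_injective h'

lemma rel_of_mem_eset {a b : Fin n} (h : (a, b) ∈ eset π) : Rel π a b := by
  rw [mem_eset] at h
  rcases h with ⟨h1, h2⟩ | ⟨h1, h2⟩
  · exact ⟨h1.ne, Or.inl h2⟩
  · exact ⟨h1.ne', Or.inr h2⟩

include hπ2 hπr in
lemma not_both_eset {a b : Fin n} (h : (a, b) ∈ eset π) : (b, a) ∉ eset π := by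
  intro h'
  rw [mem_eset] at h h'
  rcases h with ⟨h1, h2⟩ | ⟨h1, h2⟩ <;> rcases h' with ⟨h1', h2'⟩ | ⟨h1', h2'⟩
  · omega
  · have : π (lo b) = lo a := by rw [← h2, hπ2]
    rw [this] at h2'; exact lo_ne_hi h2'
  · have : π (lo a) = lo b := by rw [← h2', hπ2]
    exact lo_ne_hi (this.symm.trans h2)
  · omega

include hπ2 hπr in
lemma good_eset : Good (eset π) := by
  constructor
  · rintro ⟨a, b⟩ he
    exact (rel_of_mem_eset he).1
  · rintro ⟨a, b⟩ he ⟨c, d⟩ hf hne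
    have hab := rel_of_mem_eset he
    have hcd := rel_of_mem_eset hf
    simp only [ne_eq, Prod.mk.injEq] at hne ⊢
    refine ⟨?_, ?_, ?_, ?_⟩ <;> rintro rfl
    · exact hne ⟨rfl, rel_functional hab hcd⟩
    · have := rel_functional hab (rel_symm hπ2 hπr hcd)
      subst this
      exact not_both_eset hπ2 hπr he hf
    · have := rel_functional (rel_symm hπ2 hπr hab) hcd
      subst this
      exact not_both_eset hπ2 hπr hf he
    · have := rel_functional (rel_symm hπ2 hπr hab) (rel_symm hπ2 hπr hcd)
      subst this
      exact hne ⟨rfl, rfl⟩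

include hπ2 hπr in
lemma mem_used_eset_iff {i : Fin n} :
    i ∈ used (eset π) ↔ (π (lo i) ≠ lo i ∧ π (lo i) ≠ hi i) := by
  constructor
  · intro h
    rw [mem_used] at h
    obtain ⟨e, he, hei⟩ := h
    have hrel : Rel π i (if e.1 = i then e.2 else e.1) := by
      rcases hei with h1 | h1
      · rw [if_pos h1]; rw [← h1]; exact rel_of_mem_eset he
      · rcases eq_or_ne e.1 i with h2 | h2
        · rw [if_pos h2]; rw [← h2]; exact rel_of_mem_eset he
        · rw [if_neg h2]; rw [← h1]
          exact rel_symm hπ2 hπr (rel_of_mem_eset (by rw [show (e.1, e.2) = e from rfl]; exact he))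
    obtain ⟨hne, h1 | h1⟩ := hrel
    · rw [h1]
      exact ⟨fun hh => hne (lo_injective hh).symm, fun hh => lo_ne_hi hh⟩
    · rw [h1]
      exact ⟨fun hh => lo_ne_hi hh.symm, fun hh => hne (hi_injective hh).symm⟩
  · rintro ⟨h1, h2⟩
    have hy := cases_lmh (π (lo i))
    rcases hy with ⟨j, hj⟩ | hmid | ⟨j, hj⟩
    · have hij : i ≠ j := fun h => h1 (by rw [hj, h])
      rcases lt_or_gt_of_ne hij with h3 | h3
      · rw [mem_used]
        exact ⟨(i, j), mem_eset.mpr (Or.inl ⟨h3, hj⟩), Or.inl rfl⟩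
      · have : π (lo j) = lo i := by rw [← hj, hπ2]
        rw [mem_used]
        exact ⟨(j, i), mem_eset.mpr (Or.inl ⟨h3, this⟩), Or.inr rfl⟩
    · exact absurd hmid (pi_lo_ne_mid hπ2 hπr)
    · have hij : i ≠ j := fun h => h2 (by rw [hj, h])
      rcases lt_or_gt_of_ne hij with h3 | h3
      · -- i < j, π (lo i) = hi j; then π (lo j) = hi i
        have : π (lo j) = hi i := by
          have h4 : π (hi j) = lo i := by rw [← hj, hπ2]
          rw [pi_hi hπr] at h4
          rw [← rev_lo, ← h4, Fin.rev_rev]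
        rw [mem_used]
        exact ⟨(j, i), mem_eset.mpr (Or.inr ⟨h3, this⟩), Or.inr rfl⟩
      · rw [mem_used]
        exact ⟨(i, j), mem_eset.mpr (Or.inr ⟨h3, hj⟩), Or.inl rfl⟩

include hπ2 hπr in
lemma disjoint_cset_used : Disjoint (cset π) (used (eset π)) := by
  rw [Finset.disjoint_left]
  intro i hic hiu
  exact ((mem_used_eset_iff hπ2 hπr).mp hiu).2 (mem_cset.mp hic)

include hπ2 hπr in
lemma nonfixed_eq :
    (Finset.univ.filter fun x => π x ≠ x)
      = ((used (eset π) ∪ cset π).image lo) ∪ ((used (eset π) ∪ cset π).image hi) := by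
  ext x
  simp only [mem_filter, mem_univ, true_and, mem_union, mem_image]
  constructor
  · intro hx
    rcases cases_lmh x with ⟨i, rfl⟩ | rfl | ⟨i, rfl⟩
    · refine Or.inl ⟨i, ?_, rfl⟩
      rcases eq_or_ne (π (lo i)) (hi i) with h | h
      · exact Or.inr (mem_cset.mpr h)
      · exact Or.inl ((mem_used_eset_iff hπ2 hπr).mpr ⟨hx, h⟩)
    · exact absurd (pi_mid hπr) hx
    · refine Or.inr ⟨i, ?_, rfl⟩
      have hx' : π (lo i) ≠ lo i := fun h => hx ((pi_lo_fixed_iff_hi hπr).mp h)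
      rcases eq_or_ne (π (lo i)) (hi i) with h | h
      · exact Or.inr (mem_cset.mpr h)
      · exact Or.inl ((mem_used_eset_iff hπ2 hπr).mpr ⟨hx', h⟩)
  · have key : ∀ i : Fin n, i ∈ used (eset π) ∨ i ∈ cset π → π (lo i) ≠ lo i := by
      intro i hi'
      rcases hi' with h | h
      · exact ((mem_used_eset_iff hπ2 hπr).mp h).1
      · rw [mem_cset.mp h]; exact lo_ne_hi.symm
    rintro (⟨i, hi', rfl⟩ | ⟨i, hi', rfl⟩)
    · exact key i hi'
    · intro h
      exact key i hi' ((pi_lo_fixed_iff_hi hπr).mpr h)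

lemma disjoint_lo_hi_images {s t : Finset (Fin n)} :
    Disjoint (s.image lo) (t.image hi) := by
  rw [Finset.disjoint_left]
  rintro x hx hy
  simp only [mem_image] at hx hy
  obtain ⟨i, _, rfl⟩ := hx
  obtain ⟨j, _, hj⟩ := hy
  exact lo_ne_hi hj.symm

include hπ2 hπr in
lemma nonfixed_card :
    (Finset.univ.filter fun x => π x ≠ x).card = 2 * (2 * (eset π).card + (cset π).card) := by
  rw [nonfixed_eq hπ2 hπr, card_union_of_disjoint disjoint_lo_hi_images,
    card_image_of_injective _ lo_injective, card_image_of_injective _ hi_injective,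
    card_union_of_disjoint (disjoint_cset_used hπ2 hπr).symm,
    card_used (good_eset hπ2 hπr)]
  ring

/-- the π-fixed pairs -/
def fsetm (π : Equiv.Perm (Fin (2*n+1))) : Finset (Fin n) :=
  (Finset.univ \ used (eset π)) \ cset π

include hπ2 hπr in
lemma mem_fsetm {i : Fin n} : i ∈ fsetm π ↔ π (lo i) = lo i := by
  simp only [fsetm, mem_sdiff, mem_univ, true_and]
  constructor
  · rintro ⟨h1, h2⟩
    have := mem_used_eset_iff hπ2 hπr (i := i)
    rw [mem_cset] at h2
    by_contra h3
    exact h1 (this.mpr ⟨h3, h2⟩)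
  · intro h
    constructor
    · intro hu
      exact ((mem_used_eset_iff hπ2 hπr).mp hu).1 h
    · rw [mem_cset, h]
      exact lo_ne_hi

variable {ε : Fin (2*n+1) → Bool}
  (hε3 : ∀ i, π i ≠ i → ε i = false) (hε4 : ∀ i, π i = i → ε i.rev = ε i)

include hπ2 hπr hε3 in
lemma aset_subset_fsetm : aset ε ⊆ fsetm π := by
  intro i hia
  rw [mem_aset] at hia
  rw [mem_fsetm hπ2 hπr]
  by_contra h
  rw [hε3 _ h] at hia
  exact Bool.false_ne_true hia

include hπ2 hπr hε3 hε4 in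
lemma fixedtrue_eq :
    (Finset.univ.filter fun x => π x = x ∧ ε x = true)
      = (aset ε).image lo ∪ (aset ε).image hi ∪
        (if ε (mid n) = true then {mid n} else ∅) := by
  ext x
  simp only [mem_filter, mem_univ, true_and, mem_union, mem_image]
  constructor
  · rintro ⟨hfix, htrue⟩
    rcases cases_lmh x with ⟨i, rfl⟩ | rfl | ⟨i, rfl⟩
    · exact Or.inl (Or.inl ⟨i, mem_aset.mpr htrue, rfl⟩)
    · rw [htrue]; exact Or.inr (by simp)
    · refine Or.inl (Or.inr ⟨i, ?_, rfl⟩)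
      have h1 : π (lo i) = lo i := (pi_lo_fixed_iff_hi hπr).mpr hfix
      have h2 := hε4 (lo i) h1
      rw [rev_lo] at h2
      exact mem_aset.mpr (h2.symm.trans htrue)
  · have key : ∀ i : Fin n, i ∈ aset ε → π (lo i) = lo i := by
      intro i h
      by_contra h2
      rw [mem_aset, hε3 _ h2] at h
      exact Bool.false_ne_true h
    rintro ((⟨i, hia, rfl⟩ | ⟨i, hia, rfl⟩) | hmid)
    · exact ⟨key i hia, mem_aset.mp hia⟩
    · have h1 := key i hia
      have h2 := hε4 (lo i) h1
      rw [rev_lo] at h2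
      exact ⟨(pi_lo_fixed_iff_hi hπr).mp h1, h2.trans (mem_aset.mp hia)⟩
    · rcases hm : ε (mid n) with _ | _
      · simp [hm] at hmid
      · simp only [hm, if_pos, mem_singleton] at hmid
        subst hmid
        exact ⟨pi_mid hπr, hm⟩

include hπ2 hπr hε3 hε4 in
lemma fixedfalse_eq :
    (Finset.univ.filter fun x => π x = x ∧ ε x = false)
      = (fsetm π \ aset ε).image lo ∪ (fsetm π \ aset ε).image hi ∪
        (if ε (mid n) = true then ∅ else {mid n}) := by
  ext x
  simp only [mem_filter, mem_univ, true_and, mem_union, mem_image, mem_sdiff]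
  constructor
  · rintro ⟨hfix, hfalse⟩
    rcases cases_lmh x with ⟨i, rfl⟩ | rfl | ⟨i, rfl⟩
    · refine Or.inl (Or.inl ⟨i, ⟨(mem_fsetm hπ2 hπr).mpr hfix, ?_⟩, rfl⟩)
      rw [mem_aset, hfalse]; simp
    · rw [hfalse]; exact Or.inr (by simp)
    · have h1 : π (lo i) = lo i := (pi_lo_fixed_iff_hi hπr).mpr hfix
      refine Or.inl (Or.inr ⟨i, ⟨(mem_fsetm hπ2 hπr).mpr h1, ?_⟩, rfl⟩)
      have h2 := hε4 (lo i) h1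
      rw [rev_lo] at h2
      rw [mem_aset, h2.symm.trans hfalse]; simp
  · rintro ((⟨i, ⟨hif, hia⟩, rfl⟩ | ⟨i, ⟨hif, hia⟩, rfl⟩) | hmid)
    · have h1 := (mem_fsetm hπ2 hπr).mp hif
      rw [mem_aset] at hia
      exact ⟨h1, by simpa using hia⟩
    · have h1 := (mem_fsetm hπ2 hπr).mp hif
      have h2 := hε4 (lo i) h1
      rw [rev_lo] at h2
      rw [mem_aset] at hia
      refine ⟨(pi_lo_fixed_iff_hi hπr).mp h1, ?_⟩
      rw [h2]; simpa using hia
    · rcases hm : ε (mid n) with _ | _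
      · simp only [hm, Bool.false_eq_true, if_neg, if_false, mem_singleton] at hmid
        subst hmid
        exact ⟨pi_mid hπr, hm⟩
      · simp [hm] at hmid

include hπ2 hπr hε3 hε4 in
lemma fixedtrue_card :
    (Finset.univ.filter fun x => π x = x ∧ ε x = true).card
      = 2 * (aset ε).card + (bif ε (mid n) then 1 else 0) := by
  rw [fixedtrue_eq hπ2 hπr hε3 hε4]
  rw [card_union_of_disjoint, card_union_of_disjoint disjoint_lo_hi_images,
    card_image_of_injective _ lo_injective, card_image_of_injective _ hi_injective]
  · rcases hm : ε (mid n) with _ | _ <;> simp [hm] <;> omega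
  · rw [Finset.disjoint_left]
    rintro x hx hy
    rcases hm : ε (mid n) with _ | _
    · simp [hm] at hy
    · simp only [hm, if_pos, mem_singleton] at hy
      subst hy
      simp only [mem_union, mem_image] at hx
      rcases hx with ⟨i, _, h⟩ | ⟨i, _, h⟩
      · exact lo_ne_mid h
      · exact hi_ne_mid h

include hπ2 hπr hε3 hε4 in
lemma fixedfalse_card :
    (Finset.univ.filter fun x => π x = x ∧ ε x = false).card
      = 2 * (fsetm π \ aset ε).card + (bif ε (mid n) then 0 else 1) := by
  rw [fixedfalse_eq hπ2 hπr hε3 hε4]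
  rw [card_union_of_disjoint, card_union_of_disjoint disjoint_lo_hi_images,
    card_image_of_injective _ lo_injective, card_image_of_injective _ hi_injective]
  · rcases hm : ε (mid n) with _ | _ <;> simp [hm] <;> omega
  · rw [Finset.disjoint_left]
    rintro x hx hy
    rcases hm : ε (mid n) with _ | _
    · simp only [hm, Bool.false_eq_true, if_neg, if_false, mem_singleton] at hy
      subst hy
      simp only [mem_union, mem_image] at hx
      rcases hx with ⟨i, _, h⟩ | ⟨i, _, h⟩
      · exact lo_ne_mid h
      · exact hi_ne_mid h
    · simp [hm] at hy

end Forward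

section Backward

variable {E : Finset (Fin n × Fin n)} {C : Finset (Fin n)}

noncomputable def plow (E : Finset (Fin n × Fin n)) (C : Finset (Fin n)) (i : Fin n) :
    Fin (2*n+1) :=
  if i ∈ C then hi i
  else if h : ∃ e ∈ E, e.1 = i ∨ e.2 = i then
    (if h.choose.1 = i then (if h.choose.1 < h.choose.2 then lo h.choose.2 else hi h.choose.2)
     else (if h.choose.1 < h.choose.2 then lo h.choose.1 else hi h.choose.1))
  else lo i

lemma plow_mem_C {i : Fin n} (h : i ∈ C) : plow E C i = hi i := by
  rw [plow, if_pos h]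

lemma plow_free {i : Fin n} (h1 : i ∉ C) (h2 : i ∉ used E) : plow E C i = lo i := by
  rw [plow, if_neg h1, dif_neg]
  intro hex
  exact h2 (mem_used.mpr hex)

lemma not_mem_C_of_used (hd : Disjoint C (used E)) {i : Fin n} (h : i ∈ used E) : i ∉ C :=
  fun hc => (Finset.disjoint_left.mp hd hc) h

lemma plow_edge_fst (hg : Good E) (hd : Disjoint C (used E)) {a b : Fin n}
    (he : (a, b) ∈ E) : plow E C a = (if a < b then lo b else hi b) := by
  have hu : a ∈ used E := mem_used.mpr ⟨(a, b), he, Or.inl rfl⟩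
  have hex : ∃ e ∈ E, e.1 = a ∨ e.2 = a := ⟨(a, b), he, Or.inl rfl⟩
  rw [plow, if_neg (not_mem_C_of_used hd hu), dif_pos hex]
  have hspec := hex.choose_spec
  have heq : hex.choose = (a, b) := by
    apply good_unique hg hspec.1 he
    rcases hspec.2 with h | h
    · exact Or.inl h
    · exact Or.inr (Or.inr (Or.inl h))
  rw [heq]
  simp

lemma plow_edge_snd (hg : Good E) (hd : Disjoint C (used E)) {a b : Fin n}
    (he : (a, b) ∈ E) : plow E C b = (if a < b then lo a else hi a) := by
  have hab : a ≠ b := hg.1 _ he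
  have hu : b ∈ used E := mem_used.mpr ⟨(a, b), he, Or.inr rfl⟩
  have hex : ∃ e ∈ E, e.1 = b ∨ e.2 = b := ⟨(a, b), he, Or.inr rfl⟩
  rw [plow, if_neg (not_mem_C_of_used hd hu), dif_pos hex]
  have hspec := hex.choose_spec
  have heq : hex.choose = (a, b) := by
    apply good_unique hg hspec.1 he
    rcases hspec.2 with h | h
    · exact Or.inr (Or.inl h)
    · exact Or.inr (Or.inr (Or.inr h))
  rw [heq]
  simp [hab]

lemma used_cases {i : Fin n} (h : i ∈ used E) : ∃ j, (i, j) ∈ E ∨ (j, i) ∈ E := by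
  obtain ⟨e, he, hei⟩ := mem_used.mp h
  rcases hei with h1 | h1
  · exact ⟨e.2, Or.inl (by rw [← h1, Prod.mk.eta]; exact he)⟩
  · exact ⟨e.1, Or.inr (by rw [← h1, Prod.mk.eta]; exact he)⟩

noncomputable def pfun (E : Finset (Fin n × Fin n)) (C : Finset (Fin n)) :
    Fin (2*n+1) → Fin (2*n+1) := fun x =>
  if h : (x : ℕ) < n then plow E C ⟨x, h⟩
  else if h2 : n < (x : ℕ) then (plow E C ⟨2*n - (x : ℕ), by have := x.isLt; omega⟩).rev
  else x

lemma pfun_lo (i : Fin n) : pfun E C (lo i) = plow E C i := by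
  have h : ((lo i : Fin (2*n+1)) : ℕ) < n := i.isLt
  simp only [pfun]
  rw [dif_pos h]
  exact congrArg _ (Fin.ext rfl)

lemma pfun_mid : pfun E C (mid n) = mid n := by
  simp only [pfun]
  rw [dif_neg (by simp [mid]), dif_neg (by simp [mid])]

lemma pfun_hi (i : Fin n) : pfun E C (hi i) = (plow E C i).rev := by
  have hlt := i.isLt
  have h1 : ¬ ((hi i : Fin (2*n+1)) : ℕ) < n := by simp only [hi]; omega
  have h2 : n < ((hi i : Fin (2*n+1)) : ℕ) := by simp only [hi]; omega
  simp only [pfun]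
  rw [dif_neg h1, dif_pos h2]
  congr 2
  exact Fin.ext (by simp only [hi]; omega)

lemma pfun_rev (x : Fin (2*n+1)) : pfun E C x.rev = (pfun E C x).rev := by
  rcases cases_lmh x with ⟨i, rfl⟩ | rfl | ⟨i, rfl⟩
  · rw [rev_lo, pfun_hi, pfun_lo]
  · rw [rev_mid, pfun_mid, rev_mid]
  · rw [rev_hi, pfun_lo, pfun_hi, Fin.rev_rev]

lemma pfun_plow (hg : Good E) (hd : Disjoint C (used E)) (i : Fin n) :
    pfun E C (plow E C i) = lo i := by
  by_cases hC : i ∈ C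
  · rw [plow_mem_C hC, pfun_hi, plow_mem_C hC, rev_hi]
  · by_cases hU : i ∈ used E
    · obtain ⟨j, hj | hj⟩ := used_cases hU
      · have hij : i ≠ j := hg.1 _ hj
        rw [plow_edge_fst hg hd hj]
        rcases lt_or_gt_of_ne hij with h | h
        · rw [if_pos h, pfun_lo, plow_edge_snd hg hd hj, if_pos h]
        · rw [if_neg (by omega), pfun_hi, plow_edge_snd hg hd hj, if_neg (by omega), rev_hi]
      · have hji : j ≠ i := hg.1 _ hj
        rw [plow_edge_snd hg hd hj]
        rcases lt_or_gt_of_ne hji with h | h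
        · rw [if_pos h, pfun_lo, plow_edge_fst hg hd hj, if_pos h]
        · rw [if_neg (by omega), pfun_hi, plow_edge_fst hg hd hj, if_neg (by omega), rev_hi]
    · rw [plow_free hC hU, pfun_lo, plow_free hC hU]

lemma pfun_invol (hg : Good E) (hd : Disjoint C (used E)) (x : Fin (2*n+1)) :
    pfun E C (pfun E C x) = x := by
  rcases cases_lmh x with ⟨i, rfl⟩ | rfl | ⟨i, rfl⟩
  · rw [pfun_lo]
    exact pfun_plow hg hd i
  · rw [pfun_mid, pfun_mid]
  · rw [← rev_lo, pfun_rev, pfun_rev, pfun_lo, pfun_plow hg hd]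

noncomputable def efun (A : Finset (Fin n)) (s : Bool) : Fin (2*n+1) → Bool := fun x =>
  if h : (x : ℕ) < n then decide ((⟨x, h⟩ : Fin n) ∈ A)
  else if h2 : n < (x : ℕ) then
    decide ((⟨2*n - (x : ℕ), by have := x.isLt; omega⟩ : Fin n) ∈ A)
  else s

lemma efun_lo {A : Finset (Fin n)} {s : Bool} (i : Fin n) :
    efun A s (lo i) = decide (i ∈ A) := by
  have h : ((lo i : Fin (2*n+1)) : ℕ) < n := i.isLt
  simp only [efun]
  rw [dif_pos h]
  congr 1

lemma efun_hi {A : Finset (Fin n)} {s : Bool} (i : Fin n) :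
    efun A s (hi i) = decide (i ∈ A) := by
  have hlt := i.isLt
  have h1 : ¬ ((hi i : Fin (2*n+1)) : ℕ) < n := by simp only [hi]; omega
  have h2 : n < ((hi i : Fin (2*n+1)) : ℕ) := by simp only [hi]; omega
  simp only [efun]
  rw [dif_neg h1, dif_pos h2]
  congr 2
  exact Fin.ext (by simp only [hi]; omega)

lemma efun_mid {A : Finset (Fin n)} {s : Bool} : efun A s (mid n) = s := by
  simp only [efun]
  rw [dif_neg (by simp [mid]), dif_neg (by simp [mid])]

end Backward

section Characterize

variable {E : Finset (Fin n × Fin n)} {C : Finset (Fin n)}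

lemma plow_eq_lo_iff (hg : Good E) (hd : Disjoint C (used E)) {a b : Fin n} :
    plow E C a = lo b ↔
      (a = b ∧ a ∉ C ∧ a ∉ used E) ∨ ((a, b) ∈ E ∧ a < b) ∨ ((b, a) ∈ E ∧ b < a) := by
  constructor
  · intro h
    by_cases hC : a ∈ C
    · rw [plow_mem_C hC] at h
      exact absurd h.symm lo_ne_hi
    · by_cases hU : a ∈ used E
      · obtain ⟨j, hj | hj⟩ := used_cases hU
        · have hne : a ≠ j := hg.1 _ hj
          rw [plow_edge_fst hg hd hj] at h
          rcases lt_or_gt_of_ne hne with h2 | h2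
          · rw [if_pos h2] at h
            exact Or.inr (Or.inl ⟨by rwa [← lo_injective h], by rwa [← lo_injective h]⟩)
          · rw [if_neg (by omega)] at h
            exact absurd h.symm lo_ne_hi
        · have hne : j ≠ a := hg.1 _ hj
          rw [plow_edge_snd hg hd hj] at h
          rcases lt_or_gt_of_ne hne with h2 | h2
          · rw [if_pos h2] at h
            exact Or.inr (Or.inr ⟨by rwa [← lo_injective h], by rwa [← lo_injective h]⟩)
          · rw [if_neg (by omega)] at h
            exact absurd h.symm lo_ne_hi
      · rw [plow_free hC hU] at h
        exact Or.inl ⟨lo_injective h, hC, hU⟩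
  · rintro (⟨rfl, h1, h2⟩ | ⟨he, hab⟩ | ⟨he, hba⟩)
    · exact plow_free h1 h2
    · rw [plow_edge_fst hg hd he, if_pos hab]
    · rw [plow_edge_snd hg hd he, if_pos hba]

lemma plow_eq_hi_iff (hg : Good E) (hd : Disjoint C (used E)) {a b : Fin n} :
    plow E C a = hi b ↔
      (a = b ∧ a ∈ C) ∨ ((a, b) ∈ E ∧ b < a) ∨ ((b, a) ∈ E ∧ a < b) := by
  constructor
  · intro h
    by_cases hC : a ∈ C
    · rw [plow_mem_C hC] at h
      exact Or.inl ⟨hi_injective h, hC⟩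
    · by_cases hU : a ∈ used E
      · obtain ⟨j, hj | hj⟩ := used_cases hU
        · have hne : a ≠ j := hg.1 _ hj
          rw [plow_edge_fst hg hd hj] at h
          rcases lt_or_gt_of_ne hne with h2 | h2
          · rw [if_pos h2] at h
            exact absurd h lo_ne_hi
          · rw [if_neg (by omega)] at h
            obtain rfl := hi_injective h
            exact Or.inr (Or.inl ⟨hj, h2⟩)
        · have hne : j ≠ a := hg.1 _ hj
          rw [plow_edge_snd hg hd hj] at h
          rcases lt_or_gt_of_ne hne with h2 | h2
          · rw [if_pos h2] at h
            exact absurd h lo_ne_hi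
          · rw [if_neg (by omega)] at h
            obtain rfl := hi_injective h
            exact Or.inr (Or.inr ⟨hj, h2⟩)
      · rw [plow_free hC hU] at h
        exact absurd h lo_ne_hi
  · rintro (⟨rfl, h1⟩ | ⟨he, hba⟩ | ⟨he, hab⟩)
    · exact plow_mem_C h1
    · rw [plow_edge_fst hg hd he, if_neg (by omega)]
    · rw [plow_edge_snd hg hd he, if_neg (by omega)]

noncomputable def invPerm (E : Finset (Fin n × Fin n)) (C : Finset (Fin n))
    (hg : Good E) (hd : Disjoint C (used E)) : Equiv.Perm (Fin (2*n+1)) :=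
  Function.Involutive.toPerm (pfun E C) (pfun_invol hg hd)

lemma invPerm_apply (hg : Good E) (hd : Disjoint C (used E)) (x : Fin (2*n+1)) :
    invPerm E C hg hd x = pfun E C x := rfl

lemma eset_invPerm (hg : Good E) (hd : Disjoint C (used E)) :
    eset (invPerm E C hg hd) = E := by
  ext ⟨a, b⟩
  rw [mem_eset]
  simp only [invPerm_apply, pfun_lo]
  constructor
  · rintro (⟨hab, h⟩ | ⟨hba, h⟩)
    · rcases (plow_eq_lo_iff hg hd).mp h with ⟨rfl, _, _⟩ | ⟨he, _⟩ | ⟨he, hba⟩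
      · omega
      · exact he
      · omega
    · rcases (plow_eq_hi_iff hg hd).mp h with ⟨rfl, _⟩ | ⟨he, _⟩ | ⟨he, hab⟩
      · omega
      · exact he
      · omega
  · intro he
    have hne : a ≠ b := hg.1 _ he
    rcases lt_or_gt_of_ne hne with h2 | h2
    · exact Or.inl ⟨h2, (plow_eq_lo_iff hg hd).mpr (Or.inr (Or.inl ⟨he, h2⟩))⟩
    · exact Or.inr ⟨h2, (plow_eq_hi_iff hg hd).mpr (Or.inr (Or.inl ⟨he, h2⟩))⟩

lemma cset_invPerm (hg : Good E) (hd : Disjoint C (used E)) :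
    cset (invPerm E C hg hd) = C := by
  ext i
  rw [mem_cset]
  simp only [invPerm_apply, pfun_lo]
  rw [plow_eq_hi_iff hg hd]
  constructor
  · rintro (⟨_, h⟩ | ⟨he, h⟩ | ⟨he, h⟩)
    · exact h
    · exact absurd rfl (hg.1 _ he)
    · exact absurd rfl (hg.1 _ he)
  · intro h
    exact Or.inl ⟨rfl, h⟩

lemma aset_efun {A : Finset (Fin n)} {s : Bool} : aset (efun A s) = A := by
  ext i
  rw [mem_aset, efun_lo]
  simp

end Characterize

section PartI

def fm (n D k : ℕ) :
    Finset ((Finset (Fin n × Fin n)) × (Finset (Fin n)) × (Finset (Fin n)) × Bool) :=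
  Finset.univ.filter fun y =>
    Good y.1 ∧ Disjoint y.2.1 (used y.1) ∧
    2 * y.1.card + y.2.1.card = k ∧
    y.2.2.1 ⊆ (Finset.univ \ used y.1) \ y.2.1 ∧
    2 * y.2.2.1.card + (bif y.2.2.2 then 1 else 0)
      = 2 * ((((Finset.univ \ used y.1) \ y.2.1) \ y.2.2.1).card) + (bif y.2.2.2 then 0 else 1) + D

lemma mem_fm {n D k : ℕ} {y : (Finset (Fin n × Fin n)) × (Finset (Fin n)) × (Finset (Fin n)) × Bool} :
    y ∈ fm n D k ↔
      Good y.1 ∧ Disjoint y.2.1 (used y.1) ∧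
      2 * y.1.card + y.2.1.card = k ∧
      y.2.2.1 ⊆ (Finset.univ \ used y.1) \ y.2.1 ∧
      2 * y.2.2.1.card + (bif y.2.2.2 then 1 else 0)
        = 2 * ((((Finset.univ \ used y.1) \ y.2.1) \ y.2.2.1).card) + (bif y.2.2.2 then 0 else 1) + D := by
  rw [fm, Finset.mem_filter]
  simp only [Finset.mem_univ, true_and]

theorem partI (p q k : ℕ) :
    signedSymInvCount p q k = (fm (p+q) (2*p - (2*q+1)) k).card := by
  rw [signedSymInvCount, Nat.card_eq_fintype_card, Fintype.card_subtype]
  refine Finset.card_bij'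
    (fun x _ => (eset x.1, cset x.1, aset x.2, x.2 (mid (p+q))))
    (fun y hy => (invPerm y.1 y.2.1 ((mem_fm.mp hy).1) ((mem_fm.mp hy).2.1),
      efun y.2.2.1 y.2.2.2)) ?_ ?_ ?_ ?_
  · -- forward well-defined
    rintro ⟨π, ε⟩ hx
    rw [Finset.mem_filter] at hx
    obtain ⟨-, ⟨h1, hrev, hε3, hε4, h5⟩, hcount⟩ := hx
    dsimp only at h1 hrev hε3 hε4 h5 hcount
    have hπ2 : ∀ x, π (π x) = x := fun x => by
      rw [← Equiv.Perm.mul_apply, h1, Equiv.Perm.one_apply]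
    rw [mem_fm]
    dsimp only
    refine ⟨good_eset hπ2 hrev, disjoint_cset_used hπ2 hrev, ?_, ?_, ?_⟩
    · have := nonfixed_card hπ2 hrev
      rw [hcount] at this
      omega
    · exact aset_subset_fsetm hπ2 hrev hε3
    · have := h5
      rw [fixedtrue_card hπ2 hrev hε3 hε4, fixedfalse_card hπ2 hrev hε3 hε4] at this
      exact this
  · -- backward well-defined
    rintro ⟨E, C, A, s⟩ hy
    obtain ⟨hg, hd, hcnt, hsub, hsgn⟩ := mem_fm.mp hy
    simp only at hg hd hcnt hsub hsgn ⊢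
    set π' := invPerm E C hg hd with hπ'def
    set ε' := efun A s with hε'def
    have happ : ∀ x, π' x = pfun E C x := fun x => rfl
    have hπ2 : ∀ x, π' (π' x) = x := fun x => pfun_invol hg hd x
    have hrev : ∀ x, π' x.rev = (π' x).rev := fun x => pfun_rev x
    have hfreeA : ∀ i : Fin (p+q), i ∈ A → plow E C i = lo i := by
      intro i hiA
      have := hsub hiA
      rw [Finset.mem_sdiff, Finset.mem_sdiff] at this
      exact plow_free this.2 this.1.2
    have hε3 : ∀ x, π' x ≠ x → ε' x = false := by
      intro x hx
      rcases cases_lmh x with ⟨i, rfl⟩ | rfl | ⟨i, rfl⟩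
      · rw [hε'def, efun_lo, decide_eq_false_iff_not]
        intro hiA
        exact hx ((happ _).trans (by rw [pfun_lo, hfreeA i hiA]))
      · exact absurd ((happ _).trans pfun_mid) hx
      · rw [hε'def, efun_hi, decide_eq_false_iff_not]
        intro hiA
        exact hx ((happ _).trans (by rw [pfun_hi, hfreeA i hiA, rev_lo]))
    have hε4 : ∀ x, π' x = x → ε' x.rev = ε' x := by
      intro x _
      rcases cases_lmh x with ⟨i, rfl⟩ | rfl | ⟨i, rfl⟩
      · rw [rev_lo, hε'def, efun_hi, efun_lo]
      · rw [rev_mid]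
      · rw [rev_hi, hε'def, efun_hi, efun_lo]
    refine Finset.mem_filter.mpr ⟨Finset.mem_univ _, ⟨?_, hrev, hε3, hε4, ?_⟩, ?_⟩
    · exact Equiv.ext fun x => by
        rw [Equiv.Perm.mul_apply, hπ2, Equiv.Perm.one_apply]
    · rw [fixedtrue_card hπ2 hrev hε3 hε4, fixedfalse_card hπ2 hrev hε3 hε4]
      have hA : aset ε' = A := aset_efun
      have hsmid : ε' (mid (p+q)) = s := efun_mid
      have hF : fsetm π' = (Finset.univ \ used E) \ C := by
        rw [fsetm, eset_invPerm hg hd, cset_invPerm hg hd]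
      rw [hA, hsmid, hF]
      exact hsgn
    · rw [nonfixed_card hπ2 hrev, eset_invPerm hg hd, cset_invPerm hg hd, hcnt]
  · -- left inverse
    rintro ⟨π, ε⟩ hx
    rw [Finset.mem_filter] at hx
    obtain ⟨-, ⟨h1, hrev, hε3, hε4, h5⟩, hcount⟩ := hx
    dsimp only at h1 hrev hε3 hε4 h5 hcount
    have hπ2 : ∀ x, π (π x) = x := fun x => by
      rw [← Equiv.Perm.mul_apply, h1, Equiv.Perm.one_apply]
    have hg := good_eset hπ2 hrev
    have hd := disjoint_cset_used hπ2 hrev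
    have key : ∀ i : Fin (p+q), plow (eset π) (cset π) i = π (lo i) := by
      intro i
      by_cases hC : i ∈ cset π
      · rw [plow_mem_C hC, (mem_cset.mp hC)]
      · by_cases hU : i ∈ used (eset π)
        · obtain ⟨j, hj | hj⟩ := used_cases hU
          · rcases mem_eset.mp hj with ⟨hlt, heq⟩ | ⟨hlt, heq⟩
            · rw [plow_edge_fst hg hd hj, if_pos hlt, heq]
            · rw [plow_edge_fst hg hd hj, if_neg (by omega), heq]
          · rcases mem_eset.mp hj with ⟨hlt, heq⟩ | ⟨hlt, heq⟩
            · rw [plow_edge_snd hg hd hj, if_pos hlt]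
              rw [← heq, hπ2]
            · rw [plow_edge_snd hg hd hj, if_neg (by omega)]
              have h2 : π (hi i) = lo j := by rw [← heq, hπ2]
              rw [pi_hi hrev] at h2
              rw [← rev_lo, ← h2, Fin.rev_rev]
        · rw [plow_free hC hU]
          rcases (not_imp_not.mpr (mem_used_eset_iff hπ2 hrev).mpr hU :
            ¬(π (lo i) ≠ lo i ∧ π (lo i) ≠ hi i)) with h
          rw [mem_cset] at hC
          by_cases hfix : π (lo i) = lo i
          · exact hfix.symm
          · exact absurd (by tauto : π (lo i) = hi i) hC
    have hperm : invPerm (eset π) (cset π) hg hd = π := by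
      apply Equiv.ext
      intro x
      rw [invPerm_apply]
      rcases cases_lmh x with ⟨i, rfl⟩ | rfl | ⟨i, rfl⟩
      · rw [pfun_lo, key]
      · rw [pfun_mid, pi_mid hrev]
      · rw [pfun_hi, key, ← pi_hi hrev]
    have hef : efun (aset ε) (ε (mid (p+q))) = ε := by
      funext x
      rcases cases_lmh x with ⟨i, rfl⟩ | rfl | ⟨i, rfl⟩
      · rw [efun_lo]
        rcases hb : ε (lo i) with _ | _
        · simp [mem_aset, hb]
        · simp [mem_aset, hb]
      · exact efun_mid
      · rw [efun_hi]
        by_cases hfix : π (lo i) = lo i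
        · have := hε4 (lo i) hfix
          rw [rev_lo] at this
          rw [this]
          rcases hb : ε (lo i) with _ | _
          · simp [mem_aset, hb]
          · simp [mem_aset, hb]
        · have hlo := hε3 (lo i) hfix
          have hhi := hε3 (hi i) (fun h => hfix ((pi_lo_fixed_iff_hi hrev).mpr h))
          rw [hhi, decide_eq_false_iff_not, mem_aset, hlo]
          simp
    simp only [Prod.mk.injEq]
    exact ⟨hperm, hef⟩
  · -- right inverse
    rintro ⟨E, C, A, s⟩ hy
    obtain ⟨hg, hd, hcnt, hsub, hsgn⟩ := mem_fm.mp hy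
    simp only [Prod.mk.injEq]
    exact ⟨eset_invPerm hg hd, cset_invPerm hg hd, aset_efun, efun_mid⟩

end PartI

section ASeq

def g (b : ℕ) : ℕ := Nat.factorial (2*b) / Nat.factorial b

lemma g_mul (b : ℕ) : g b * Nat.factorial b = Nat.factorial (2*b) :=
  Nat.div_mul_cancel (Nat.factorial_dvd_factorial (by omega))

lemma g_succ (b : ℕ) : g (b+1) = 2*(2*b+1) * g b := by
  apply Nat.eq_of_mul_eq_mul_right (Nat.factorial_pos (b+1))
  rw [g_mul]
  rw [Nat.factorial_succ b]
  rw [show 2*(2*b+1)*g b * ((b+1)*Nat.factorial b) = (((2*b)+1+1)*((2*b)+1))*(g b * Nat.factorial b)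
    from by ring, g_mul b]
  rw [show 2*(b+1) = ((2*b)+1)+1 from by ring, Nat.factorial_succ, Nat.factorial_succ]
  ring

lemma aSeq_eq_sum (m t : ℕ) (ht : m/2 + 1 ≤ t) :
    aSeq m = ∑ b ∈ Finset.range t, m.choose (2*b) * g b := by
  rw [aSeq]
  apply Finset.sum_subset (Finset.range_subset_range.mpr ht)
  intro b _ hb
  rw [Finset.mem_range, not_lt] at hb
  rw [Nat.choose_eq_zero_of_lt (by omega), zero_mul]

lemma aSeq_zero : aSeq 0 = 1 := by decide

lemma aSeq_one : aSeq 1 = 1 := by decide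

lemma aSeq_rec (k : ℕ) : aSeq (k+2) = aSeq (k+1) + 2*(k+1) * aSeq k := by
  rw [aSeq_eq_sum (k+2) (k/2+2) (by omega), aSeq_eq_sum (k+1) (k/2+2) (by omega),
    aSeq_eq_sum k (k/2+1) (by omega)]
  rw [Finset.sum_range_succ' _ (k/2+1), Finset.sum_range_succ' _ (k/2+1)]
  have hterm : ∀ b ∈ Finset.range (k/2+1),
      (k+2).choose (2*(b+1)) * g (b+1)
        = (k+1).choose (2*(b+1)) * g (b+1) + 2*(k+1) * (k.choose (2*b) * g b) := by
    intro b _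
    have h1 : 2*(b+1) = (2*b+1)+1 := by ring
    rw [h1, Nat.choose_succ_succ (k+1) (2*b+1), add_mul,
      add_comm ((k+1).choose (2*b+1) * g (b+1)) ((k+1).choose (2*b+1+1) * g (b+1))]
    congr 1
    rw [g_succ b]
    have h2 : (k+1) * k.choose (2*b) = (k+1).choose (2*b+1) * (2*b+1) := by
      rw [← Nat.add_one_mul_choose_eq]
    calc (k+1).choose (2*b+1) * (2*(2*b+1) * g b)
        = 2 * ((k+1).choose (2*b+1) * (2*b+1)) * g b := by ring
      _ = 2 * ((k+1) * k.choose (2*b)) * g b := by rw [← h2]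
      _ = 2*(k+1) * (k.choose (2*b) * g b) := by ring
  rw [Finset.sum_congr rfl hterm, Finset.sum_add_distrib, ← Finset.mul_sum]
  simp [Nat.choose_zero_right]
  ring

end ASeq

section PartIII

variable {M : ℕ}

def ecs (M : ℕ) (V : Finset (Fin M)) (k : ℕ) :
    Finset ((Finset (Fin M × Fin M)) × Finset (Fin M)) :=
  Finset.univ.filter fun z => Good z.1 ∧ (∀ e ∈ z.1, e.1 ∈ V ∧ e.2 ∈ V) ∧ z.2 ⊆ V ∧
    Disjoint z.2 (used z.1) ∧ 2*z.1.card + z.2.card = k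

lemma mem_ecs {V : Finset (Fin M)} {k : ℕ} {z : (Finset (Fin M × Fin M)) × Finset (Fin M)} :
    z ∈ ecs M V k ↔ Good z.1 ∧ (∀ e ∈ z.1, e.1 ∈ V ∧ e.2 ∈ V) ∧ z.2 ⊆ V ∧
      Disjoint z.2 (used z.1) ∧ 2*z.1.card + z.2.card = k := by
  rw [ecs, Finset.mem_filter]
  simp only [Finset.mem_univ, true_and]

lemma good_mono {E F : Finset (Fin M × Fin M)} (hg : Good E) (h : F ⊆ E) : Good F :=
  ⟨fun e he => hg.1 e (h he), fun e he f hf => hg.2 e (h he) f (h hf)⟩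

lemma used_mono {E F : Finset (Fin M × Fin M)} (h : F ⊆ E) : used F ⊆ used E := by
  intro i hi
  rw [mem_used] at hi ⊢
  obtain ⟨e, he, hei⟩ := hi
  exact ⟨e, h he, hei⟩

lemma used_insert (e : Fin M × Fin M) (E : Finset (Fin M × Fin M)) :
    used (insert e E) = {e.1, e.2} ∪ used E := by
  rw [used, used, Finset.biUnion_insert]

lemma good_insert {E : Finset (Fin M × Fin M)} {e : Fin M × Fin M} (hg : Good E)
    (hne : e.1 ≠ e.2) (h1 : e.1 ∉ used E) (h2 : e.2 ∉ used E) : Good (insert e E) := by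
  constructor
  · intro f hf
    rcases Finset.mem_insert.mp hf with h | h
    · rw [h]; exact hne
    · exact hg.1 f h
  · intro f hf f' hf' hne'
    rcases Finset.mem_insert.mp hf with h | h <;> rcases Finset.mem_insert.mp hf' with h' | h'
    · exact absurd (h.trans h'.symm) hne'
    · subst h
      refine ⟨?_, ?_, ?_, ?_⟩ <;> intro hx
      · exact h1 (mem_used.mpr ⟨f', h', Or.inl hx.symm⟩)
      · exact h1 (mem_used.mpr ⟨f', h', Or.inr hx.symm⟩)
      · exact h2 (mem_used.mpr ⟨f', h', Or.inl hx.symm⟩)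
      · exact h2 (mem_used.mpr ⟨f', h', Or.inr hx.symm⟩)
    · subst h'
      refine ⟨?_, ?_, ?_, ?_⟩ <;> intro hx
      · exact h1 (mem_used.mpr ⟨f, h, Or.inl hx⟩)
      · exact h2 (mem_used.mpr ⟨f, h, Or.inl hx⟩)
      · exact h1 (mem_used.mpr ⟨f, h, Or.inr hx⟩)
      · exact h2 (mem_used.mpr ⟨f, h, Or.inr hx⟩)
    · exact hg.2 f h f' h' hne'

/-- case A : the chosen vertex is unused and unmarked -/
lemma ecs_free {V : Finset (Fin M)} {v : Fin M} (hv : v ∈ V) (k : ℕ) :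
    (ecs M V k).filter (fun z => v ∉ used z.1 ∧ v ∉ z.2) = ecs M (V.erase v) k := by
  ext z
  rw [Finset.mem_filter, mem_ecs, mem_ecs]
  constructor
  · rintro ⟨⟨hg, hE, hC, hd, hcnt⟩, hnu, hnc⟩
    refine ⟨hg, ?_, ?_, hd, hcnt⟩
    · intro e he
      refine ⟨Finset.mem_erase.mpr ⟨?_, (hE e he).1⟩, Finset.mem_erase.mpr ⟨?_, (hE e he).2⟩⟩
      · rintro rfl
        exact hnu (mem_used.mpr ⟨e, he, Or.inl rfl⟩)
      · rintro rfl
        exact hnu (mem_used.mpr ⟨e, he, Or.inr rfl⟩)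
    · intro i hi
      exact Finset.mem_erase.mpr ⟨fun h => hnc (h ▸ hi), hC hi⟩
  · rintro ⟨hg, hE, hC, hd, hcnt⟩
    refine ⟨⟨hg, fun e he => ⟨Finset.mem_of_mem_erase (hE e he).1,
      Finset.mem_of_mem_erase (hE e he).2⟩, hC.trans (Finset.erase_subset _ _), hd, hcnt⟩, ?_, ?_⟩
    · intro hu
      obtain ⟨e, he, hei⟩ := mem_used.mp hu
      rcases hei with h | h
      · exact (Finset.mem_erase.mp (hE e he).1).1 h
      · exact (Finset.mem_erase.mp (hE e he).2).1 h
    · intro hc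
      exact (Finset.mem_erase.mp (hC hc)).1 rfl

/-- case B : the chosen vertex is marked -/
lemma ecs_marked {V : Finset (Fin M)} {v : Fin M} (hv : v ∈ V) (k : ℕ) :
    ((ecs M V (k+1)).filter (fun z => v ∈ z.2)).card = (ecs M (V.erase v) k).card := by
  refine Finset.card_bij' (fun z _ => (z.1, z.2.erase v)) (fun z _ => (z.1, insert v z.2))
    ?_ ?_ ?_ ?_
  · rintro z hz
    rw [Finset.mem_filter, mem_ecs] at hz
    obtain ⟨⟨hg, hE, hC, hd, hcnt⟩, hvz⟩ := hz
    have hvnu : v ∉ used z.1 := fun h => (Finset.disjoint_left.mp hd hvz) h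
    rw [mem_ecs]
    dsimp only
    refine ⟨hg, ?_, ?_, ?_, ?_⟩
    · intro e he
      refine ⟨Finset.mem_erase.mpr ⟨?_, (hE e he).1⟩, Finset.mem_erase.mpr ⟨?_, (hE e he).2⟩⟩
      · rintro rfl
        exact hvnu (mem_used.mpr ⟨e, he, Or.inl rfl⟩)
      · rintro rfl
        exact hvnu (mem_used.mpr ⟨e, he, Or.inr rfl⟩)
    · exact Finset.erase_subset_erase v hC
    · exact Finset.disjoint_of_subset_left (Finset.erase_subset _ _) hd
    · rw [Finset.card_erase_of_mem hvz]
      have : 1 ≤ z.2.card := Finset.card_pos.mpr ⟨v, hvz⟩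
      omega
  · rintro z hz
    rw [mem_ecs] at hz
    obtain ⟨hg, hE, hC, hd, hcnt⟩ := hz
    have hvnu : v ∉ used z.1 := by
      intro hu
      obtain ⟨e, he, hei⟩ := mem_used.mp hu
      rcases hei with h | h
      · exact (Finset.mem_erase.mp (hE e he).1).1 h
      · exact (Finset.mem_erase.mp (hE e he).2).1 h
    have hvnc : v ∉ z.2 := fun h => (Finset.mem_erase.mp (hC h)).1 rfl
    rw [Finset.mem_filter, mem_ecs]
    dsimp only
    refine ⟨⟨hg, fun e he => ⟨Finset.mem_of_mem_erase (hE e he).1,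
      Finset.mem_of_mem_erase (hE e he).2⟩,
      Finset.insert_subset hv (hC.trans (Finset.erase_subset _ _)),
      Finset.disjoint_insert_left.mpr ⟨hvnu, hd⟩, ?_⟩, Finset.mem_insert_self _ _⟩
    rw [Finset.card_insert_of_notMem hvnc]
    omega
  · rintro z hz
    rw [Finset.mem_filter] at hz
    dsimp only
    rw [Finset.insert_erase hz.2]
  · rintro z hz
    rw [mem_ecs] at hz
    have hvnc : v ∉ z.2 := fun h => (Finset.mem_erase.mp (hz.2.2.1 h)).1 rfl
    dsimp only
    rw [Finset.erase_insert hvnc]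

def pedges (V : Finset (Fin M)) (v : Fin M) : Finset (Fin M × Fin M) :=
  ({v} ×ˢ V.erase v) ∪ (V.erase v ×ˢ {v})

lemma mem_pedges {V : Finset (Fin M)} {v : Fin M} {e : Fin M × Fin M} :
    e ∈ pedges V v ↔ ((e.1 = v ∧ e.2 ≠ v ∧ e.2 ∈ V) ∨ (e.2 = v ∧ e.1 ≠ v ∧ e.1 ∈ V)) := by
  rw [pedges, Finset.mem_union, Finset.mem_product, Finset.mem_product]
  simp only [Finset.mem_singleton, Finset.mem_erase]
  tauto

lemma vedge_exu {E : Finset (Fin M × Fin M)} {v : Fin M} (hg : Good E) (hvu : v ∈ used E) :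
    ∃! e, e ∈ E ∧ (e.1 = v ∨ e.2 = v) := by
  obtain ⟨e, he, hor⟩ := mem_used.mp hvu
  refine ⟨e, ⟨he, hor⟩, ?_⟩
  rintro f ⟨hf, hor'⟩
  apply good_unique hg hf he
  rcases hor with h | h <;> rcases hor' with h' | h'
  · exact Or.inl (h'.trans h.symm)
  · exact Or.inr (Or.inr (Or.inl (h'.trans h.symm)))
  · exact Or.inr (Or.inl (h'.trans h.symm))
  · exact Or.inr (Or.inr (Or.inr (h'.trans h.symm)))

noncomputable def vedge (E : Finset (Fin M × Fin M)) (v : Fin M)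
    (h : ∃! e, e ∈ E ∧ (e.1 = v ∨ e.2 = v)) : Fin M × Fin M :=
  Finset.choose (fun e => e.1 = v ∨ e.2 = v) E h

lemma vedge_mem {E : Finset (Fin M × Fin M)} {v : Fin M}
    {h : ∃! e, e ∈ E ∧ (e.1 = v ∨ e.2 = v)} : vedge E v h ∈ E := by
  have := Finset.choose_mem (fun e : Fin M × Fin M => e.1 = v ∨ e.2 = v) E h
  exact this

lemma vedge_prop {E : Finset (Fin M × Fin M)} {v : Fin M}
    {h : ∃! e, e ∈ E ∧ (e.1 = v ∨ e.2 = v)} :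
    (vedge E v h).1 = v ∨ (vedge E v h).2 = v := by
  have := Finset.choose_property (fun e : Fin M × Fin M => e.1 = v ∨ e.2 = v) E h
  exact this

def estruct (M : ℕ) (V : Finset (Fin M)) (v : Fin M) (k : ℕ) :
    Finset ((Fin M × Fin M) × (Finset (Fin M × Fin M)) × Finset (Fin M)) :=
  Finset.univ.filter fun w => w.1 ∈ pedges V v ∧ w.2 ∈ ecs M (V \ {w.1.1, w.1.2}) k

lemma ecs_i_mem {V : Finset (Fin M)} {v : Fin M} {k : ℕ}
    {z : (Finset (Fin M × Fin M)) × Finset (Fin M)}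
    (hzm : z ∈ ecs M V (k+2)) (hvu : v ∈ used z.1)
    (hu : ∃! e, e ∈ z.1 ∧ (e.1 = v ∨ e.2 = v)) :
    (vedge z.1 v hu, z.1.erase (vedge z.1 v hu), z.2) ∈ estruct M V v k := by
  obtain ⟨hg, hE, hC, hd, hcnt⟩ := mem_ecs.mp hzm
  set e := vedge z.1 v hu with hedef
  have he : e ∈ z.1 := vedge_mem
  have hor : e.1 = v ∨ e.2 = v := vedge_prop
  have hne : e.1 ≠ e.2 := hg.1 e he
  rw [estruct, Finset.mem_filter]
  refine ⟨Finset.mem_univ _, ?_, ?_⟩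
  · rw [mem_pedges]
    rcases hor with h | h
    · exact Or.inl ⟨h, fun hh => hne (h.symm ▸ hh ▸ rfl), (hE e he).2⟩
    · exact Or.inr ⟨h, fun hh => hne (hh ▸ h.symm ▸ rfl), (hE e he).1⟩
  · rw [mem_ecs]
    dsimp only
    have hkey : ∀ f ∈ z.1.erase e, f.1 ∈ V \ {e.1, e.2} ∧ f.2 ∈ V \ {e.1, e.2} := by
      intro f hf
      obtain ⟨hfne, hfm⟩ := Finset.mem_erase.mp hf
      have h4 := hg.2 f hfm e he hfne
      constructor
      · rw [Finset.mem_sdiff]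
        refine ⟨(hE f hfm).1, ?_⟩
        simp only [Finset.mem_insert, Finset.mem_singleton]
        tauto
      · rw [Finset.mem_sdiff]
        refine ⟨(hE f hfm).2, ?_⟩
        simp only [Finset.mem_insert, Finset.mem_singleton]
        tauto
    refine ⟨good_mono hg (Finset.erase_subset _ _), hkey, ?_, ?_, ?_⟩
    · intro i hi
      rw [Finset.mem_sdiff]
      refine ⟨hC hi, ?_⟩
      have hiu : i ∉ used z.1 := fun h => (Finset.disjoint_left.mp hd hi) h
      simp only [Finset.mem_insert, Finset.mem_singleton]
      rintro (rfl | rfl)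
      · exact hiu (mem_used.mpr ⟨e, he, Or.inl rfl⟩)
      · exact hiu (mem_used.mpr ⟨e, he, Or.inr rfl⟩)
    · exact Finset.disjoint_of_subset_right (used_mono (Finset.erase_subset _ _)) hd
    · rw [Finset.card_erase_of_mem he]
      have : 1 ≤ z.1.card := Finset.card_pos.mpr ⟨e, he⟩
      omega

lemma ecs_j_mem {V : Finset (Fin M)} {v : Fin M} {k : ℕ} (hv : v ∈ V)
    {w : (Fin M × Fin M) × (Finset (Fin M × Fin M)) × Finset (Fin M)}
    (hw : w ∈ estruct M V v k) :
    (insert w.1 w.2.1, w.2.2) ∈ (ecs M V (k+2)).filter (fun z => v ∈ used z.1) := by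
  rw [estruct, Finset.mem_filter] at hw
  obtain ⟨-, hpe, hwe⟩ := hw
  obtain ⟨hg, hE, hC, hd, hcnt⟩ := mem_ecs.mp hwe
  have hor : w.1.1 = v ∨ w.1.2 = v := by
    rcases mem_pedges.mp hpe with ⟨h, _, _⟩ | ⟨h, _, _⟩
    · exact Or.inl h
    · exact Or.inr h
  have hne : w.1.1 ≠ w.1.2 := by
    rcases mem_pedges.mp hpe with ⟨h1, h2, _⟩ | ⟨h1, h2, _⟩
    · exact fun hh => h2 (hh.symm.trans h1)
    · exact fun hh => h2 (hh.trans h1)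
  have h1V : w.1.1 ∈ V := by
    rcases mem_pedges.mp hpe with ⟨h1, _, _⟩ | ⟨_, _, h3⟩
    · exact h1 ▸ hv
    · exact h3
  have h2V : w.1.2 ∈ V := by
    rcases mem_pedges.mp hpe with ⟨_, _, h3⟩ | ⟨h1, _, _⟩
    · exact h3
    · exact h1 ▸ hv
  have h1u : w.1.1 ∉ used w.2.1 := by
    intro hu
    obtain ⟨f, hf, hfi⟩ := mem_used.mp hu
    rcases hfi with h | h
    · have := (hE f hf).1
      rw [Finset.mem_sdiff] at this
      exact this.2 (by simp [h])
    · have := (hE f hf).2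
      rw [Finset.mem_sdiff] at this
      exact this.2 (by simp [h])
  have h2u : w.1.2 ∉ used w.2.1 := by
    intro hu
    obtain ⟨f, hf, hfi⟩ := mem_used.mp hu
    rcases hfi with h | h
    · have := (hE f hf).1
      rw [Finset.mem_sdiff] at this
      exact this.2 (by simp [h])
    · have := (hE f hf).2
      rw [Finset.mem_sdiff] at this
      exact this.2 (by simp [h])
  have hnotmem : w.1 ∉ w.2.1 := by
    intro hmem
    have := (hE w.1 hmem).1
    rw [Finset.mem_sdiff] at this
    exact this.2 (by simp)
  rw [Finset.mem_filter, mem_ecs]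
  dsimp only
  refine ⟨⟨good_insert hg hne h1u h2u, ?_, ?_, ?_, ?_⟩, ?_⟩
  · intro f hf
    rcases Finset.mem_insert.mp hf with h | hf
    · rw [h]; exact ⟨h1V, h2V⟩
    · have h1 := (hE f hf).1
      have h2 := (hE f hf).2
      rw [Finset.mem_sdiff] at h1 h2
      exact ⟨h1.1, h2.1⟩
  · intro i hi
    have := hC hi
    rw [Finset.mem_sdiff] at this
    exact this.1
  · rw [used_insert, Finset.disjoint_union_right]
    constructor
    · rw [Finset.disjoint_right]
      intro a ha haz
      have := hC haz
      rw [Finset.mem_sdiff] at this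
      exact this.2 ha
    · exact hd
  · rw [Finset.card_insert_of_notMem hnotmem]
    omega
  · exact mem_used.mpr ⟨w.1, Finset.mem_insert_self _ _, hor⟩

lemma ecs_left_inv {v : Fin M} {z : (Finset (Fin M × Fin M)) × Finset (Fin M)}
    (hu : ∃! e, e ∈ z.1 ∧ (e.1 = v ∨ e.2 = v)) :
    (insert (vedge z.1 v hu) (z.1.erase (vedge z.1 v hu)), z.2) = z := by
  rw [Finset.insert_erase vedge_mem]

lemma ecs_right_inv {V : Finset (Fin M)} {v : Fin M} {k : ℕ}
    {w : (Fin M × Fin M) × (Finset (Fin M × Fin M)) × Finset (Fin M)}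
    (hw : w ∈ estruct M V v k)
    (hu : ∃! e, e ∈ insert w.1 w.2.1 ∧ (e.1 = v ∨ e.2 = v)) :
    (vedge (insert w.1 w.2.1) v hu,
      (insert w.1 w.2.1).erase (vedge (insert w.1 w.2.1) v hu), w.2.2) = w := by
  rw [estruct, Finset.mem_filter] at hw
  obtain ⟨-, hpe, hwe⟩ := hw
  obtain ⟨hg, hE, hC, hd, hcnt⟩ := mem_ecs.mp hwe
  have hnotmem : w.1 ∉ w.2.1 := by
    intro hmem
    have := (hE w.1 hmem).1
    rw [Finset.mem_sdiff] at this
    exact this.2 (by simp)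
  have hor : w.1.1 = v ∨ w.1.2 = v := by
    rcases mem_pedges.mp hpe with ⟨h, _, _⟩ | ⟨h, _, _⟩
    · exact Or.inl h
    · exact Or.inr h
  have hchoose : vedge (insert w.1 w.2.1) v hu = w.1 :=
    hu.unique ⟨vedge_mem, vedge_prop⟩ ⟨Finset.mem_insert_self _ _, hor⟩
  rw [hchoose, Finset.erase_insert hnotmem]

lemma ecs_used_card {V : Finset (Fin M)} {v : Fin M} (hv : v ∈ V) (k : ℕ) :
    ((ecs M V (k+2)).filter (fun z => v ∈ used z.1)).card = (estruct M V v k).card := by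
  refine Finset.card_bij'
    (fun z hz =>
      (vedge z.1 v (vedge_exu ((mem_ecs.mp (Finset.mem_filter.mp hz).1).1)
          (Finset.mem_filter.mp hz).2),
        z.1.erase (vedge z.1 v (vedge_exu ((mem_ecs.mp (Finset.mem_filter.mp hz).1).1)
          (Finset.mem_filter.mp hz).2)), z.2))
    (fun w _ => (insert w.1 w.2.1, w.2.2)) ?_ ?_ ?_ ?_
  · intro z hz
    exact ecs_i_mem (Finset.mem_filter.mp hz).1 (Finset.mem_filter.mp hz).2 _
  · intro w hw
    exact ecs_j_mem hv hw
  · intro z hz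
    exact ecs_left_inv _
  · intro w hw
    exact ecs_right_inv hw _

lemma estruct_card {V : Finset (Fin M)} {v : Fin M} (hv : v ∈ V) (k : ℕ) :
    (estruct M V v k).card = ∑ e ∈ pedges V v, (ecs M (V \ {e.1, e.2}) k).card := by
  rw [Finset.card_eq_sum_card_fiberwise (f := fun w => w.1) (t := pedges V v)
    (fun w hw => ((Finset.mem_filter.mp hw).2).1)]
  refine Finset.sum_congr rfl fun e he => ?_
  refine Finset.card_bij' (fun w _ => w.2) (fun z _ => (e, z)) ?_ ?_ ?_ ?_
  · rintro w hw
    rw [Finset.mem_filter, estruct, Finset.mem_filter] at hw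
    obtain ⟨⟨-, -, hwe⟩, hfib⟩ := hw
    rwa [hfib] at hwe
  · rintro z hz
    rw [Finset.mem_filter, estruct, Finset.mem_filter]
    exact ⟨⟨Finset.mem_univ _, he, hz⟩, rfl⟩
  · rintro ⟨w1, w2⟩ hw
    rw [Finset.mem_filter] at hw
    dsimp only
    exact Prod.ext_iff.mpr ⟨hw.2.symm, rfl⟩
  · rintro z _
    rfl

lemma pedges_card {V : Finset (Fin M)} {v : Fin M} (hv : v ∈ V) :
    (pedges V v).card = 2 * (V.card - 1) := by
  rw [pedges, Finset.card_union_of_disjoint, Finset.card_product, Finset.card_product]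
  · rw [Finset.card_singleton, Finset.card_erase_of_mem hv]
    ring
  · rw [Finset.disjoint_left]
    rintro ⟨a, b⟩ ha hb
    rw [Finset.mem_product] at ha hb
    simp only [Finset.mem_singleton, Finset.mem_erase] at ha hb
    exact hb.1.1 ha.1

lemma choose_aseq_identity (m k : ℕ) :
    (m+1).choose (k+2) * aSeq (k+2)
      = m.choose (k+2) * aSeq (k+2) + m.choose (k+1) * aSeq (k+1)
        + 2*m*((m-1).choose k * aSeq k) := by
  cases m with
  | zero =>
    rw [Nat.choose_eq_zero_of_lt (show 1 < k+2 by omega),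
      Nat.choose_eq_zero_of_lt (show 0 < k+2 by omega),
      Nat.choose_eq_zero_of_lt (show 0 < k+1 by omega)]
    simp
  | succ m' =>
    have h2 : (m'+1) * m'.choose k = (m'+1).choose (k+1) * (k+1) := Nat.add_one_mul_choose_eq m' k
    rw [show m'+1-1 = m' from rfl]
    rw [show 2*(m'+1)*(m'.choose k * aSeq k) = 2*((m'+1) * m'.choose k)*aSeq k from by ring, h2]
    rw [Nat.choose_succ_succ (m'+1) (k+1), add_mul, aSeq_rec k]
    ring

lemma ecs_split {V : Finset (Fin M)} {v : Fin M} (hv : v ∈ V) (k' : ℕ) :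
    (ecs M V k').card
      = ((ecs M V k').filter (fun z => v ∈ used z.1)).card
        + ((ecs M V k').filter (fun z => v ∈ z.2)).card
        + (ecs M (V.erase v) k').card := by
  classical
  have h1 := Finset.card_filter_add_card_filter_not
    (s := ecs M V k') (p := fun z => v ∈ used z.1)
  have h2 := Finset.card_filter_add_card_filter_not
    (s := (ecs M V k').filter (fun z => ¬ v ∈ used z.1)) (p := fun z => v ∈ z.2)
  rw [Finset.filter_filter, Finset.filter_filter] at h2
  have h3 : (ecs M V k').filter (fun z => ¬ v ∈ used z.1 ∧ v ∈ z.2)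
      = (ecs M V k').filter (fun z => v ∈ z.2) := by
    ext z
    simp only [Finset.mem_filter]
    constructor
    · rintro ⟨hm, -, hc⟩
      exact ⟨hm, hc⟩
    · rintro ⟨hm, hc⟩
      refine ⟨hm, ?_, hc⟩
      have hd := (mem_ecs.mp hm).2.2.2.1
      exact fun hu => (Finset.disjoint_left.mp hd hc) hu
  rw [h3] at h2
  rw [← ecs_free hv k']
  omega

lemma ecs_card (V : Finset (Fin M)) : ∀ k, (ecs M V k).card = V.card.choose k * aSeq k := by
  induction V using Finset.strongInduction with
  | _ V IH =>
  intro k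
  rcases eq_or_ne V ∅ with rfl | hVne
  · have hecs : ∀ z ∈ ecs M (∅ : Finset (Fin M)) k, z = ((∅, ∅) :
        (Finset (Fin M × Fin M)) × Finset (Fin M)) ∧ k = 0 := by
      intro z hz
      obtain ⟨hg, hE, hC, hd, hcnt⟩ := mem_ecs.mp hz
      have hz1 : z.1 = ∅ := by
        rw [Finset.eq_empty_iff_forall_notMem]
        intro e he
        exact Finset.notMem_empty _ (hE e he).1
      have hz2 : z.2 = ∅ := Finset.subset_empty.mp hC
      refine ⟨Prod.ext_iff.mpr ⟨hz1, hz2⟩, ?_⟩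
      rw [hz1, hz2] at hcnt
      simpa using hcnt.symm
    rcases Nat.eq_zero_or_pos k with rfl | hkpos
    · have : ecs M (∅ : Finset (Fin M)) 0 = {(∅, ∅)} := by
        apply Finset.eq_singleton_iff_unique_mem.mpr
        constructor
        · rw [mem_ecs]
          refine ⟨⟨by simp, by simp⟩, by simp, by simp, ?_, by simp⟩
          rw [show ((∅, ∅) : (Finset (Fin M × Fin M)) × Finset (Fin M)).1 = ∅ from rfl,
            used_eq_empty]
          simp
        · intro z hz
          exact (hecs z hz).1
      rw [this, Finset.card_singleton, Finset.card_empty, Nat.choose_zero_right, aSeq_zero]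
    · have : ecs M (∅ : Finset (Fin M)) k = ∅ := by
        rw [Finset.eq_empty_iff_forall_notMem]
        intro z hz
        exact absurd (hecs z hz).2.symm (by omega)
      rw [this, Finset.card_empty, Finset.card_empty, Nat.choose_eq_zero_of_lt (by omega),
        zero_mul]
  · obtain ⟨v, hv⟩ := Finset.nonempty_iff_ne_empty.mpr hVne
    have hvm : 1 ≤ V.card := Finset.card_pos.mpr ⟨v, hv⟩
    have herase : (V.erase v).card = V.card - 1 := Finset.card_erase_of_mem hv
    have hss : V.erase v ⊂ V := Finset.erase_ssubset hv
    have hfree := IH _ hss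
    rw [ecs_split hv k]
    rcases k with _ | k
    · -- k = 0
      have hU : (ecs M V 0).filter (fun z => v ∈ used z.1) = ∅ := by
        rw [Finset.eq_empty_iff_forall_notMem]
        intro z hz
        rw [Finset.mem_filter] at hz
        obtain ⟨hzm, hvu⟩ := hz
        obtain ⟨hg, hE, hC, hd, hcnt⟩ := mem_ecs.mp hzm
        have hz1 : z.1 = ∅ := Finset.card_eq_zero.mp (by omega)
        rw [hz1, used_eq_empty] at hvu
        exact Finset.notMem_empty _ hvu
      have hCc : (ecs M V 0).filter (fun z => v ∈ z.2) = ∅ := by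
        rw [Finset.eq_empty_iff_forall_notMem]
        intro z hz
        rw [Finset.mem_filter] at hz
        obtain ⟨hzm, hvc⟩ := hz
        obtain ⟨hg, hE, hC, hd, hcnt⟩ := mem_ecs.mp hzm
        have hz2 : z.2 = ∅ := Finset.card_eq_zero.mp (by omega)
        rw [hz2] at hvc
        exact Finset.notMem_empty _ hvc
      rw [hU, hCc, hfree 0]
      simp [aSeq_zero]
    · rcases k with _ | k
      · -- k = 1
        have hU : (ecs M V 1).filter (fun z => v ∈ used z.1) = ∅ := by
          rw [Finset.eq_empty_iff_forall_notMem]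
          intro z hz
          rw [Finset.mem_filter] at hz
          obtain ⟨hzm, hvu⟩ := hz
          obtain ⟨hg, hE, hC, hd, hcnt⟩ := mem_ecs.mp hzm
          have hz1 : z.1 = ∅ := Finset.card_eq_zero.mp (by omega)
          rw [hz1, used_eq_empty] at hvu
          exact Finset.notMem_empty _ hvu
        rw [hU, ecs_marked hv 0, hfree 1, hfree 0, herase]
        rw [Finset.card_empty, aSeq_zero, aSeq_one, Nat.choose_zero_right,
          Nat.choose_one_right, Nat.choose_one_right]
        omega
      · -- k+2
        have hU : ((ecs M V (k+2)).filter (fun z => v ∈ used z.1)).card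
            = 2 * (V.card - 1) * ((V.card - 2).choose k * aSeq k) := by
          rw [ecs_used_card hv k, estruct_card hv k]
          rw [Finset.sum_congr rfl (fun e he => ?_), Finset.sum_const, smul_eq_mul,
            pedges_card hv]
          have h12 : e.1 ∈ V ∧ e.2 ∈ V ∧ e.1 ≠ e.2 := by
            rcases mem_pedges.mp he with ⟨h1, h2, h3⟩ | ⟨h1, h2, h3⟩
            · exact ⟨h1 ▸ hv, h3, fun hh => h2 (hh ▸ h1)⟩
            · exact ⟨h3, h1 ▸ hv, fun hh => h2 (hh.trans h1)⟩
          have hsubV : ({e.1, e.2} : Finset (Fin M)) ⊆ V := by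
            intro x hx
            rcases Finset.mem_insert.mp hx with rfl | hx
            · exact h12.1
            · rw [Finset.mem_singleton.mp hx]
              exact h12.2.1
          have hss2 : V \ {e.1, e.2} ⊂ V :=
            Finset.sdiff_ssubset hsubV ⟨e.1, Finset.mem_insert_self _ _⟩
          rw [IH _ hss2 k, Finset.card_sdiff_of_subset hsubV]
          rw [Finset.card_insert_of_notMem (by simpa using h12.2.2), Finset.card_singleton]
        obtain ⟨m', hm'⟩ : ∃ m', V.card = m' + 1 := ⟨V.card - 1, by omega⟩
        rw [hU, ecs_marked hv (k+1), hfree (k+2), hfree (k+1), herase, hm']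
        rw [show m' + 1 - 1 = m' from by omega, show m' + 1 - 2 = m' - 1 from by omega,
          show k + 1 + 1 = k + 2 from rfl]
        rw [choose_aseq_identity m' k]
        ring

end PartIII

section PartII

lemma AS_card_false {n : ℕ} (F : Finset (Fin n)) (D t : ℕ) (h4 : 4*t = 2*F.card + D + 1) :
    (Finset.univ.filter fun w : Finset (Fin n) × Bool =>
      w.1 ⊆ F ∧ 2*w.1.card + (bif w.2 then 1 else 0)
        = 2*((F \ w.1).card) + (bif w.2 then 0 else 1) + D).card
    = F.card.choose t := by
  have hset : (Finset.univ.filter fun w : Finset (Fin n) × Bool =>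
      w.1 ⊆ F ∧ 2*w.1.card + (bif w.2 then 1 else 0)
        = 2*((F \ w.1).card) + (bif w.2 then 0 else 1) + D)
      = F.powersetCard t ×ˢ ({false} : Finset Bool) := by
    ext ⟨A, s⟩
    simp only [Finset.mem_filter, Finset.mem_univ, true_and, Finset.mem_product,
      Finset.mem_powersetCard, Finset.mem_singleton]
    constructor
    · rintro ⟨hsub, heq⟩
      have hc : (F \ A).card = F.card - A.card := Finset.card_sdiff_of_subset hsub
      have hle : A.card ≤ F.card := Finset.card_le_card hsub
      cases s
      · simp only [Bool.cond_false, Bool.cond_true] at heq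
        exact ⟨⟨hsub, by omega⟩, rfl⟩
      · simp only [Bool.cond_false, Bool.cond_true] at heq
        exfalso
        omega
    · rintro ⟨⟨hsub, hcard⟩, rfl⟩
      have hc : (F \ A).card = F.card - A.card := Finset.card_sdiff_of_subset hsub
      have hle : A.card ≤ F.card := Finset.card_le_card hsub
      refine ⟨hsub, ?_⟩
      simp only [Bool.cond_false, Bool.cond_true]
      omega
  rw [hset, Finset.card_product, Finset.card_powersetCard, Finset.card_singleton, mul_one]

lemma AS_card_true {n : ℕ} (F : Finset (Fin n)) (D t : ℕ) (h4 : 4*t + 2 = 2*F.card + D + 1) :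
    (Finset.univ.filter fun w : Finset (Fin n) × Bool =>
      w.1 ⊆ F ∧ 2*w.1.card + (bif w.2 then 1 else 0)
        = 2*((F \ w.1).card) + (bif w.2 then 0 else 1) + D).card
    = F.card.choose t := by
  have hset : (Finset.univ.filter fun w : Finset (Fin n) × Bool =>
      w.1 ⊆ F ∧ 2*w.1.card + (bif w.2 then 1 else 0)
        = 2*((F \ w.1).card) + (bif w.2 then 0 else 1) + D)
      = F.powersetCard t ×ˢ ({true} : Finset Bool) := by
    ext ⟨A, s⟩
    simp only [Finset.mem_filter, Finset.mem_univ, true_and, Finset.mem_product,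
      Finset.mem_powersetCard, Finset.mem_singleton]
    constructor
    · rintro ⟨hsub, heq⟩
      have hc : (F \ A).card = F.card - A.card := Finset.card_sdiff_of_subset hsub
      have hle : A.card ≤ F.card := Finset.card_le_card hsub
      cases s
      · simp only [Bool.cond_false, Bool.cond_true] at heq
        exfalso
        omega
      · simp only [Bool.cond_false, Bool.cond_true] at heq
        exact ⟨⟨hsub, by omega⟩, rfl⟩
    · rintro ⟨⟨hsub, hcard⟩, rfl⟩
      have hc : (F \ A).card = F.card - A.card := Finset.card_sdiff_of_subset hsub
      have hle : A.card ≤ F.card := Finset.card_le_card hsub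
      refine ⟨hsub, ?_⟩
      simp only [Bool.cond_false, Bool.cond_true]
      omega
  rw [hset, Finset.card_product, Finset.card_powersetCard, Finset.card_singleton, mul_one]

lemma fm_card {n : ℕ} (D k N' : ℕ)
    (hAS : ∀ F : Finset (Fin n), F.card = n - k →
      (Finset.univ.filter fun w : Finset (Fin n) × Bool =>
        w.1 ⊆ F ∧ 2*w.1.card + (bif w.2 then 1 else 0)
          = 2*((F \ w.1).card) + (bif w.2 then 0 else 1) + D).card = N') :
    (fm n D k).card = (ecs n Finset.univ k).card * N' := by
  rw [Finset.card_eq_sum_card_fiberwise (f := fun y => (y.1, y.2.1))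
    (t := ecs n Finset.univ k) (fun y hy => ?_)]
  · have hfib : ∀ z ∈ ecs n Finset.univ k,
        ((fm n D k).filter (fun y => (y.1, y.2.1) = z)).card = N' := by
      intro z hz
      obtain ⟨hg, hEtriv, hCtriv, hd, hcnt⟩ := mem_ecs.mp hz
      have hFcard : (((Finset.univ \ used z.1) \ z.2)).card = n - k := by
        have h2 : z.2 ⊆ Finset.univ \ used z.1 := by
          intro i hi
          rw [Finset.mem_sdiff]
          exact ⟨Finset.mem_univ _, fun hu => (Finset.disjoint_left.mp hd hi) hu⟩
        have h3 := Finset.card_le_univ (used z.1)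
        rw [Fintype.card_fin, card_used hg] at h3
        rw [Finset.card_sdiff_of_subset h2, Finset.card_sdiff_of_subset (Finset.subset_univ _), Finset.card_univ,
          Fintype.card_fin, card_used hg]
        omega
      rw [← hAS _ hFcard]
      refine Finset.card_bij' (fun y _ => (y.2.2.1, y.2.2.2))
        (fun w _ => (z.1, z.2, w.1, w.2)) ?_ ?_ ?_ ?_
      · rintro ⟨y1, y2, y3, y4⟩ hy
        rw [Finset.mem_filter] at hy
        obtain ⟨hym, hyz⟩ := hy
        dsimp only at hyz
        subst hyz
        obtain ⟨-, -, -, hsub, hsgn⟩ := mem_fm.mp hym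
        rw [Finset.mem_filter]
        exact ⟨Finset.mem_univ _, hsub, hsgn⟩
      · rintro ⟨w1, w2⟩ hw
        rw [Finset.mem_filter] at hw
        obtain ⟨-, hwsub, hwsgn⟩ := hw
        rw [Finset.mem_filter, mem_fm]
        exact ⟨⟨hg, hd, hcnt, hwsub, hwsgn⟩, rfl⟩
      · rintro ⟨y1, y2, y3, y4⟩ hy
        rw [Finset.mem_filter] at hy
        obtain ⟨hym, hyz⟩ := hy
        dsimp only at hyz
        subst hyz
        rfl
      · rintro ⟨w1, w2⟩ _
        rfl
    rw [Finset.sum_congr rfl hfib, Finset.sum_const, smul_eq_mul]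
  · obtain ⟨hg, hd, hcnt, hsub, hsgn⟩ := mem_fm.mp hy
    rw [Finset.mem_coe, mem_ecs]
    exact ⟨hg, fun e _ => ⟨Finset.mem_univ _, Finset.mem_univ _⟩, Finset.subset_univ _, hd, hcnt⟩

end PartII

end SSI

theorem count_signed_symmetric_involutions_with_k_pairs
    (p q k : ℕ) (hpq : q < p) (hk : k ≤ 2 * q + 1) :
    (∀ l : ℕ, k = 2 * l →
      signedSymInvCount p q k
        = Nat.choose (p + q - 2 * l) (p - l) * Nat.choose (p + q) (2 * l) * aSeq (2 * l)) ∧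
    (∀ l : ℕ, k = 2 * l + 1 →
      signedSymInvCount p q k
        = Nat.choose (p + q - (2 * l + 1)) (p - (l + 1)) * Nat.choose (p + q) (2 * l + 1)
            * aSeq (2 * l + 1)) := by
  constructor
  · rintro l rfl
    have hl : l ≤ q := by omega
    rw [SSI.partI p q (2*l)]
    rw [SSI.fm_card (2*p - (2*q+1)) (2*l) ((p+q-2*l).choose (p-l)) (fun F hF => ?_)]
    · rw [SSI.ecs_card Finset.univ (2*l), Finset.card_univ, Fintype.card_fin]
      ring
    · rw [SSI.AS_card_false F (2*p-(2*q+1)) (p-l) (by rw [hF]; omega), hF]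
  · rintro l rfl
    have hl : l ≤ q := by omega
    rw [SSI.partI p q (2*l+1)]
    rw [SSI.fm_card (2*p - (2*q+1)) (2*l+1) ((p+q-(2*l+1)).choose (p-(l+1))) (fun F hF => ?_)]
    · rw [SSI.ecs_card Finset.univ (2*l+1), Finset.card_univ, Fintype.card_fin]
      ring
    · rw [SSI.AS_card_true F (2*p-(2*q+1)) (p-(l+1)) (by rw [hF]; omega), hF]
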